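/- arXiv:1205.3437 — 2 statements merged into one kernel-verified Lean document; each statement's English description precedes it below -/
import Mathlib

section
/- For every T ≥ 0 and every smooth compactly supported function s : ℝ^l → ΛV*, one has ∫_{ℝ^l} ⟨(H_T s)(Z), s(Z)⟩ dZ ≥ 0. (This is the positivity part of Proposition 2.3 and Theorem 2.9: the model Witten Laplacian is a positive operator.) -/
set_option linter.unnecessarySeqFocus false

open MeasureTheory

noncomputable section

/-- Coordinate model of `ΛV*` with respect to the orthonormal basis of monomials
`e^{i_1} ∧ … ∧ e^{i_k}`, indexed by subsets `I ⊆ {1,…,l}`. -/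
abbrev ExtAlg (l : ℕ) := EuclideanSpace ℝ (Finset (Fin l))

/-- The sign `(-1)^{#{i ∈ I : i < α}}`. -/
def msign {l : ℕ} (α : Fin l) (I : Finset (Fin l)) : ℝ :=
  (-1 : ℝ) ^ (I.filter (· < α)).card

/-- Exterior (left wedge) multiplication by the basis covector `e^α`. -/
def wedgeBasis {l : ℕ} (α : Fin l) : ExtAlg l →ₗ[ℝ] ExtAlg l where
  toFun s := WithLp.toLp 2 (fun I => if α ∈ I then msign α I * s (I.erase α) else 0)
  map_add' s t := by
    ext I
    by_cases h : α ∈ I <;> simp [h, mul_add]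
  map_smul' c s := by
    ext I
    by_cases h : α ∈ I <;> simp [h] <;> ring_nf

/-- Interior multiplication (contraction) by the basis vector `e_α`. -/
def contractBasis {l : ℕ} (α : Fin l) : ExtAlg l →ₗ[ℝ] ExtAlg l where
  toFun s := WithLp.toLp 2 (fun I => if α ∈ I then 0 else msign α I * s (insert α I))
  map_add' s t := by
    ext I
    by_cases h : α ∈ I <;> simp [h, mul_add]
  map_smul' c s := by
    ext I
    by_cases h : α ∈ I <;> simp [h] <;> ring_nf

/-- The operator `K = Σ_{α=1}^{n⁻} i_{e_α}∘(e^α∧) + Σ_{α=n⁻+1}^{l} (e^α∧)∘i_{e_α}`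
of (2.12). -/
def Kop (l nm : ℕ) : ExtAlg l →ₗ[ℝ] ExtAlg l :=
  ∑ α ∈ Finset.univ.filter (fun α : Fin l => (α : ℕ) < nm),
      contractBasis α ∘ₗ wedgeBasis α
    + ∑ α ∈ Finset.univ.filter (fun α : Fin l => nm ≤ (α : ℕ)),
      wedgeBasis α ∘ₗ contractBasis α

/-- Second partial derivative `∂²s/∂Z_α²`. -/
def pderiv2 {l : ℕ} (α : Fin l) (s : EuclideanSpace ℝ (Fin l) → ExtAlg l) :
    EuclideanSpace ℝ (Fin l) → ExtAlg l :=
  fun Z => fderiv ℝ (fun W => fderiv ℝ s W (EuclideanSpace.single α 1)) Z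
    (EuclideanSpace.single α 1)

/-- The model Witten Laplacian
`(H_T s)(Z) = −Σ_α (∂²s/∂Z_α²)(Z) + (T²|Z|² − Tl)·s(Z) + 2T·K(s(Z))`. -/
def wittenH (l nm : ℕ) (T : ℝ) (s : EuclideanSpace ℝ (Fin l) → ExtAlg l) :
    EuclideanSpace ℝ (Fin l) → ExtAlg l :=
  fun Z => -(∑ α : Fin l, pderiv2 α s Z) + (T ^ 2 * ‖Z‖ ^ 2 - T * l) • s Z
    + (2 * T) • Kop l nm (s Z)

open scoped RealInnerProductSpace

lemma msign_mul_self {l : ℕ} (α : Fin l) (I : Finset (Fin l)) : msign α I * msign α I = 1 := by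
  rw [msign, ← mul_pow]; norm_num

lemma msign_insert {l : ℕ} (α : Fin l) (I : Finset (Fin l)) :
    msign α (insert α I) = msign α I := by
  rw [msign, msign, Finset.filter_insert]
  simp

lemma msign_erase {l : ℕ} (α : Fin l) (I : Finset (Fin l)) :
    msign α (I.erase α) = msign α I := by
  rw [msign, msign, Finset.filter_erase, Finset.erase_eq_of_notMem]
  simp

lemma contract_wedge_apply {l : ℕ} (α : Fin l) (x : ExtAlg l) (I : Finset (Fin l)) :
    (contractBasis α ∘ₗ wedgeBasis α) x I = if α ∈ I then 0 else x I := by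
  by_cases h : α ∈ I
  · simp [LinearMap.comp_apply, contractBasis, wedgeBasis, h]
  · simp only [LinearMap.comp_apply, contractBasis, wedgeBasis, LinearMap.coe_mk,
      AddHom.coe_mk, WithLp.ofLp_toLp, if_neg h, Finset.mem_insert_self, if_pos, Finset.erase_insert h,
      msign_insert]
    rw [← mul_assoc, msign_mul_self, one_mul]

lemma wedge_contract_apply {l : ℕ} (α : Fin l) (x : ExtAlg l) (I : Finset (Fin l)) :
    (wedgeBasis α ∘ₗ contractBasis α) x I = if α ∈ I then x I else 0 := by
  by_cases h : α ∈ I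
  · simp only [LinearMap.comp_apply, contractBasis, wedgeBasis, LinearMap.coe_mk,
      AddHom.coe_mk, WithLp.ofLp_toLp, if_pos h, Finset.notMem_erase, if_neg, Finset.insert_erase h,
      msign_erase]
    simp only [if_false]
    rw [← mul_assoc, msign_mul_self, one_mul]
  · simp [LinearMap.comp_apply, contractBasis, wedgeBasis, h]

lemma inner_Kop_self_nonneg {l : ℕ} (nm : ℕ) (x : ExtAlg l) : 0 ≤ ⟪Kop l nm x, x⟫ := by
  rw [PiLp.inner_apply]
  refine Finset.sum_nonneg fun I _ => ?_
  have hK : Kop l nm x I =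
      (∑ α ∈ Finset.univ.filter (fun α : Fin l => (α : ℕ) < nm),
        (if α ∈ I then 0 else x I))
      + ∑ α ∈ Finset.univ.filter (fun α : Fin l => nm ≤ (α : ℕ)),
        (if α ∈ I then x I else 0) := by
    rw [Kop, LinearMap.add_apply, LinearMap.sum_apply, LinearMap.sum_apply]
    have hev : ∀ (F : Finset (Fin l)) (f : Fin l → ExtAlg l),
        ((∑ α ∈ F, f α : ExtAlg l) I) = ∑ α ∈ F, f α I := fun F f =>
      map_sum (EuclideanSpace.proj (𝕜 := ℝ) I) f F
    rw [PiLp.add_apply, hev, hev]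
    simp only [← LinearMap.comp_apply, contract_wedge_apply, wedge_contract_apply]
  simp only [RCLike.inner_apply, conj_trivial, hK]
  rw [mul_add, Finset.mul_sum, Finset.mul_sum]
  refine add_nonneg (Finset.sum_nonneg fun α _ => ?_) (Finset.sum_nonneg fun α _ => ?_) <;>
    · split <;> simp [mul_self_nonneg]

/-- First directional derivative along the `α`-th coordinate. -/
def Dcoord {l : ℕ} (α : Fin l) (s : EuclideanSpace ℝ (Fin l) → ExtAlg l) :
    EuclideanSpace ℝ (Fin l) → ExtAlg l :=
  fun Z => fderiv ℝ s Z (EuclideanSpace.single α 1)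

lemma pderiv2_eq {l : ℕ} (α : Fin l) (s : EuclideanSpace ℝ (Fin l) → ExtAlg l)
    (Z : EuclideanSpace ℝ (Fin l)) :
    pderiv2 α s Z = fderiv ℝ (Dcoord α s) Z (EuclideanSpace.single α 1) := rfl

lemma integral_fderiv_apply_eq_zero {l : ℕ} {f : EuclideanSpace ℝ (Fin l) → ℝ}
    (hf : ContDiff ℝ (⊤ : ℕ∞) f) (h'f : HasCompactSupport f) (v : EuclideanSpace ℝ (Fin l)) :
    ∫ Z, fderiv ℝ f Z v = 0 := by
  have h1 : ((⊤ : ℕ∞) : WithTop ℕ∞) ≠ 0 := by simp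
  obtain ⟨C, hC⟩ := ContDiff.lipschitzWith_of_hasCompactSupport h'f hf h1
  have key := LipschitzWith.integral_lineDeriv_mul_eq (μ := volume)
    (LipschitzWith.const (1 : ℝ)) hC h'f (-v)
  have hconst : ∀ x : EuclideanSpace ℝ (Fin l), lineDeriv ℝ (fun _ => (1:ℝ)) x (-v) = 0 := by
    intro x
    rw [(differentiableAt_const (1:ℝ)).lineDeriv_eq_fderiv]
    simp
  simp only [hconst, zero_mul, integral_zero, neg_neg, mul_one] at key
  have heq : (fun Z => fderiv ℝ f Z v) = fun Z => lineDeriv ℝ f Z v :=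
    funext fun Z => (hf.differentiable h1 Z).lineDeriv_eq_fderiv.symm
  rw [heq]
  exact key.symm

section Analysis

variable {l : ℕ} {s : EuclideanSpace ℝ (Fin l) → ExtAlg l}

lemma Dcoord_contDiff (hs : ContDiff ℝ (⊤ : ℕ∞) s) (α : Fin l) : ContDiff ℝ (⊤ : ℕ∞) (Dcoord α s) :=
  ((contDiff_infty_iff_fderiv.mp hs).2).clm_apply contDiff_const

lemma Dcoord_zero (α : Fin l) {Z : EuclideanSpace ℝ (Fin l)} (hZ : Z ∉ tsupport s) :
    Dcoord α s Z = 0 := by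
  rw [Dcoord, fderiv_of_notMem_tsupport _ hZ]
  rfl

open scoped RealInnerProductSpace in
/-- The scalar potential whose derivative is used in the integration by parts. -/
def wfun {l : ℕ} (T : ℝ) (α : Fin l) (s : EuclideanSpace ℝ (Fin l) → ExtAlg l) :
    EuclideanSpace ℝ (Fin l) → ℝ :=
  fun Z => ⟪Dcoord α s Z, s Z⟫ + T * (Z α * ⟪s Z, s Z⟫)

lemma coord_contDiff (α : Fin l) :
    ContDiff ℝ (⊤ : ℕ∞) (fun Z : EuclideanSpace ℝ (Fin l) => Z α) :=
  (EuclideanSpace.proj (𝕜 := ℝ) α).contDiff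

lemma wfun_contDiff (hs : ContDiff ℝ (⊤ : ℕ∞) s) (T : ℝ) (α : Fin l) : ContDiff ℝ (⊤ : ℕ∞) (wfun T α s) :=
  (((Dcoord_contDiff hs α).inner ℝ hs)).add
    (contDiff_const.mul ((coord_contDiff α).mul (hs.inner ℝ hs)))

lemma wfun_compactSupport (hsupp : HasCompactSupport s) (T : ℝ) (α : Fin l) : HasCompactSupport (wfun T α s) := by
  apply HasCompactSupport.intro hsupp
  intro Z hZ
  have h0 : s Z = 0 := image_eq_zero_of_notMem_tsupport hZ
  simp [wfun, h0]

open scoped RealInnerProductSpace in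
lemma fderiv_wfun (hs : ContDiff ℝ (⊤ : ℕ∞) s) (T : ℝ) (α : Fin l) (Z : EuclideanSpace ℝ (Fin l)) :
    fderiv ℝ (wfun T α s) Z (EuclideanSpace.single α 1)
      = (⟪Dcoord α s Z, Dcoord α s Z⟫ + ⟪pderiv2 α s Z, s Z⟫)
        + T * (Z α * (⟪s Z, Dcoord α s Z⟫ + ⟪Dcoord α s Z, s Z⟫) + ⟪s Z, s Z⟫ * 1) := by
  have h1 : ((⊤ : ℕ∞) : WithTop ℕ∞) ≠ 0 := by simp
  have hsd : Differentiable ℝ s := hs.differentiable h1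
  have hDd : Differentiable ℝ (Dcoord α s) := (Dcoord_contDiff hs α).differentiable h1
  have hinner1 : DifferentiableAt ℝ (fun W => ⟪Dcoord α s W, s W⟫) Z :=
    (hDd Z).inner ℝ (hsd Z)
  have hcoord : DifferentiableAt ℝ (fun W : EuclideanSpace ℝ (Fin l) => W α) Z :=
    ((coord_contDiff α).differentiable h1) Z
  have hinner2 : DifferentiableAt ℝ (fun W => ⟪s W, s W⟫) Z := (hsd Z).inner ℝ (hsd Z)
  have hmul : DifferentiableAt ℝ (fun W : EuclideanSpace ℝ (Fin l) =>
      W α * ⟪s W, s W⟫) Z := hcoord.mul hinner2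
  have hfc : fderiv ℝ (fun W : EuclideanSpace ℝ (Fin l) => W α) Z
      (EuclideanSpace.single α 1) = 1 := by
    have : (fun W : EuclideanSpace ℝ (Fin l) => W α)
        = ⇑(EuclideanSpace.proj (𝕜 := ℝ) α) := rfl
    rw [this, ContinuousLinearMap.fderiv]
    simp [EuclideanSpace.single_apply]
  have hw : wfun T α s = fun W => ⟪Dcoord α s W, s W⟫ + T * (W α * ⟪s W, s W⟫) := rfl
  rw [hw, fderiv_fun_add (g := fun W => T * (W α * ⟪s W, s W⟫)) hinner1 ((differentiableAt_const T).mul hmul), ContinuousLinearMap.add_apply,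
    fderiv_inner_apply (𝕜 := ℝ) (hDd Z) (hsd Z),
    fderiv_const_mul hmul T, ContinuousLinearMap.smul_apply,
    fderiv_fun_mul hcoord hinner2, ContinuousLinearMap.add_apply, ContinuousLinearMap.smul_apply,
    ContinuousLinearMap.smul_apply, fderiv_inner_apply (𝕜 := ℝ) (hsd Z) (hsd Z), hfc]
  simp only [smul_eq_mul, ← pderiv2_eq]
  have hDs : fderiv ℝ s Z (EuclideanSpace.single α 1) = Dcoord α s Z := rfl
  rw [hDs]

end Analysis

lemma norm_sq_eq_sum' {l : ℕ} (Z : EuclideanSpace ℝ (Fin l)) :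
    ‖Z‖ ^ 2 = ∑ α : Fin l, (Z α) ^ 2 := by
  rw [EuclideanSpace.norm_eq, Real.sq_sqrt (by positivity)]
  simp [sq_abs]


open RealInnerProductSpace in
/-- Positivity of the model Witten Laplacian: for `T ≥ 0` and every smooth compactly
supported `s : ℝ^l → ΛV*`, one has `∫ ⟨H_T s, s⟩ ≥ 0`. -/
theorem model_witten_laplacian_nonneg (l nm : ℕ) (hnm : nm ≤ l) (T : ℝ) (hT : 0 ≤ T)
    (s : EuclideanSpace ℝ (Fin l) → ExtAlg l) (hs : ContDiff ℝ (⊤ : ℕ∞) s)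
    (hsupp : HasCompactSupport s) :
    0 ≤ ∫ Z, ⟪wittenH l nm T s Z, s Z⟫ := by
  have h1 : ((⊤ : ℕ∞) : WithTop ℕ∞) ≠ 0 := by simp
  have hsd : Differentiable ℝ s := hs.differentiable h1
  -- per-coordinate pointwise identity
  have hperα : ∀ (Z : EuclideanSpace ℝ (Fin l)) (α : Fin l),
      ‖Dcoord α s Z + (T * Z α) • s Z‖ ^ 2
        - fderiv ℝ (wfun T α s) Z (EuclideanSpace.single α 1)
      = -⟪pderiv2 α s Z, s Z⟫ + (T ^ 2 * (Z α) ^ 2 - T) * ⟪s Z, s Z⟫ := by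
    intro Z α
    rw [fderiv_wfun hs T α Z, norm_add_sq_real, ← real_inner_self_eq_norm_sq,
      ← real_inner_self_eq_norm_sq, real_inner_smul_right, real_inner_smul_left,
      real_inner_smul_right, real_inner_comm (s Z) (Dcoord α s Z)]
    ring
  have hnormZ : ∀ Z : EuclideanSpace ℝ (Fin l),
      T ^ 2 * ‖Z‖ ^ 2 - T * l = ∑ α : Fin l, (T ^ 2 * (Z α) ^ 2 - T) := by
    intro Z
    rw [Finset.sum_sub_distrib, ← Finset.mul_sum, ← norm_sq_eq_sum', Finset.sum_const,
      Finset.card_univ, Fintype.card_fin, nsmul_eq_mul, mul_comm (l : ℝ) T]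
  -- pointwise main identity
  have hmain : ∀ Z : EuclideanSpace ℝ (Fin l), ⟪wittenH l nm T s Z, s Z⟫
      = ((∑ α : Fin l, ‖Dcoord α s Z + (T * Z α) • s Z‖ ^ 2)
          + 2 * T * ⟪Kop l nm (s Z), s Z⟫)
        - ∑ α : Fin l, fderiv ℝ (wfun T α s) Z (EuclideanSpace.single α 1) := by
    intro Z
    have hsum : (∑ α : Fin l, ‖Dcoord α s Z + (T * Z α) • s Z‖ ^ 2)
        - ∑ α : Fin l, fderiv ℝ (wfun T α s) Z (EuclideanSpace.single α 1)
        = ∑ α : Fin l, (-⟪pderiv2 α s Z, s Z⟫ + (T ^ 2 * (Z α) ^ 2 - T) * ⟪s Z, s Z⟫) := by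
      rw [← Finset.sum_sub_distrib]
      exact Finset.sum_congr rfl fun α _ => hperα Z α
    have hsum2 : ∑ α : Fin l, (-⟪pderiv2 α s Z, s Z⟫ + (T ^ 2 * (Z α) ^ 2 - T) * ⟪s Z, s Z⟫)
        = -(∑ α : Fin l, ⟪pderiv2 α s Z, s Z⟫)
          + (∑ α : Fin l, (T ^ 2 * (Z α) ^ 2 - T)) * ⟪s Z, s Z⟫ := by
      rw [Finset.sum_add_distrib, Finset.sum_neg_distrib, Finset.sum_mul]
    simp only [wittenH, inner_add_left, inner_neg_left, sum_inner, real_inner_smul_left]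
    rw [hnormZ Z]
    linarith [hsum, hsum2]
  -- integrability
  have hPc : Continuous (fun Z => (∑ α : Fin l, ‖Dcoord α s Z + (T * Z α) • s Z‖ ^ 2)
      + 2 * T * ⟪Kop l nm (s Z), s Z⟫) := by
    apply Continuous.add
    · apply continuous_finset_sum
      intro α _
      apply Continuous.pow
      apply Continuous.norm
      exact ((Dcoord_contDiff hs α).continuous).add
        ((continuous_const.mul
          (show Continuous (fun Z : EuclideanSpace ℝ (Fin l) => Z α) from
            (EuclideanSpace.proj (𝕜 := ℝ) α).continuous)).smul hs.continuous)
    · exact continuous_const.mul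
        (Continuous.inner
          ((LinearMap.continuous_of_finiteDimensional (Kop l nm)).comp hs.continuous)
          hs.continuous)
  have hPsupp : HasCompactSupport (fun Z => (∑ α : Fin l,
      ‖Dcoord α s Z + (T * Z α) • s Z‖ ^ 2) + 2 * T * ⟪Kop l nm (s Z), s Z⟫) := by
    apply HasCompactSupport.intro hsupp
    intro Z hZ
    have h0 : s Z = 0 := image_eq_zero_of_notMem_tsupport hZ
    have hD0 : ∀ α : Fin l, Dcoord α s Z = 0 := fun α => Dcoord_zero α hZ
    simp [h0, hD0]
  have hPint : Integrable (fun Z => (∑ α : Fin l,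
      ‖Dcoord α s Z + (T * Z α) • s Z‖ ^ 2) + 2 * T * ⟪Kop l nm (s Z), s Z⟫) :=
    hPc.integrable_of_hasCompactSupport hPsupp
  have hQint1 : ∀ α : Fin l, Integrable
      (fun Z => fderiv ℝ (wfun T α s) Z (EuclideanSpace.single α 1)) := by
    intro α
    have hc : Continuous (fun Z => fderiv ℝ (wfun T α s) Z (EuclideanSpace.single α 1)) :=
      (((contDiff_infty_iff_fderiv.mp (wfun_contDiff hs T α)).2).clm_apply
        contDiff_const).continuous
    have hcs : HasCompactSupport
        (fun Z => fderiv ℝ (wfun T α s) Z (EuclideanSpace.single α 1)) :=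
      (wfun_compactSupport hsupp T α).fderiv_apply ℝ _
    exact hc.integrable_of_hasCompactSupport hcs
  have hQint : Integrable (fun Z => ∑ α : Fin l,
      fderiv ℝ (wfun T α s) Z (EuclideanSpace.single α 1)) :=
    integrable_finset_sum _ fun α _ => hQint1 α
  have key : ∫ Z, ⟪wittenH l nm T s Z, s Z⟫
      = (∫ Z, ((∑ α : Fin l, ‖Dcoord α s Z + (T * Z α) • s Z‖ ^ 2)
          + 2 * T * ⟪Kop l nm (s Z), s Z⟫))
        - ∫ Z, (∑ α : Fin l, fderiv ℝ (wfun T α s) Z (EuclideanSpace.single α 1)) := by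
    rw [← integral_sub hPint hQint]
    exact integral_congr_ae (Filter.Eventually.of_forall fun Z => hmain Z)
  rw [key, integral_finset_sum _ fun α _ => hQint1 α,
    Finset.sum_eq_zero fun α _ => integral_fderiv_apply_eq_zero
      (wfun_contDiff hs T α) (wfun_compactSupport hsupp T α) _, sub_zero]
  apply integral_nonneg
  intro Z
  apply add_nonneg
  · exact Finset.sum_nonneg fun α _ => by positivity
  · exact mul_nonneg (by positivity) (inner_Kop_self_nonneg nm (s Z))

end
end

section
/- Let ε > 0, let ρ : ℝ^l → [0,1] be a measurable function such that ρ(Z) = 1 whenever |Z| ≤ ε/2 and ρ(Z) = 0 whenever |Z| ≥ ε, and let γ ≥ 0 be a real number. Then there exists C > 0 such that for all T ≥ 1, ∫_{ℝ^l} |Z|^{2γ}·ρ(Z)²·exp(−T|Z|²) dZ ≤ C·T^{−γ}·∫_{ℝ^l} ρ(Z)²·exp(−T|Z|²) dZ. (This is the Gaussian moment estimate underlying the projection bound (2.65): ‖p_T |Z|^γ s‖ ≤ C T^{−γ/2} ‖s‖.) -/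
open MeasureTheory

private lemma aux_rpow_le_exp {γ : ℝ} (hγ : 0 ≤ γ) :
    ∃ M : ℝ, 1 ≤ M ∧ ∀ x : ℝ, 0 ≤ x → x ^ γ ≤ M * Real.exp (x / 2) := by
  set n := ⌈γ⌉₊ with hn
  have hM0 : (0 : ℝ) ≤ (n.factorial : ℝ) * 2 ^ n := by positivity
  refine ⟨(n.factorial : ℝ) * 2 ^ n + 1, by linarith, ?_⟩
  intro x hx
  have hexp1 : (1 : ℝ) ≤ Real.exp (x / 2) := Real.one_le_exp (by linarith)
  rcases le_or_gt x 1 with h1 | h1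
  · have h2 : x ^ γ ≤ 1 := Real.rpow_le_one hx h1 hγ
    nlinarith
  · have hγn : γ ≤ (n : ℝ) := Nat.le_ceil γ
    have h2 : x ^ γ ≤ x ^ (n : ℝ) := Real.rpow_le_rpow_of_exponent_le h1.le hγn
    rw [Real.rpow_natCast] at h2
    have h3 : (x / 2) ^ n / (n.factorial : ℝ) ≤ Real.exp (x / 2) :=
      Real.pow_div_factorial_le_exp (x / 2) (by linarith) n
    have hfac : (0 : ℝ) < (n.factorial : ℝ) := by positivity
    have h4 : (x / 2) ^ n ≤ (n.factorial : ℝ) * Real.exp (x / 2) := by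
      rw [div_le_iff₀ hfac] at h3; linarith [h3]
    have h5 : x ^ n = 2 ^ n * (x / 2) ^ n := by
      rw [div_pow]; field_simp
    calc x ^ γ ≤ x ^ n := h2
      _ = 2 ^ n * (x / 2) ^ n := h5
      _ ≤ 2 ^ n * ((n.factorial : ℝ) * Real.exp (x / 2)) := by
          have h6 : (0:ℝ) ≤ (2:ℝ) ^ n := by positivity
          exact mul_le_mul_of_nonneg_left h4 h6
      _ ≤ ((n.factorial : ℝ) * 2 ^ n + 1) * Real.exp (x / 2) := by
          nlinarith [Real.exp_pos (x / 2)]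

private lemma aux_integrable_gauss (l : ℕ) {b : ℝ} (hb : 0 < b) :
    Integrable (fun Z : EuclideanSpace ℝ (Fin l) => Real.exp (-b * ‖Z‖ ^ 2)) := by
  have h := (GaussianFourier.integrable_cexp_neg_mul_sq_norm_add
      (V := EuclideanSpace ℝ (Fin l)) (b := (b : ℂ)) (by simpa using hb) 0 0).norm
  refine h.congr ?_
  filter_upwards with v
  simp [Complex.norm_exp, ← Complex.ofReal_pow]

set_option maxHeartbeats 1000000 in
/-- The Gaussian moment estimate underlying (2.65): for a cutoff `ρ` as in (2.47) and
`γ ≥ 0`, there is `C > 0` such that for all `T ≥ 1`,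
`∫ |Z|^{2γ}ρ(Z)²exp(−T|Z|²) dZ ≤ C·T^{−γ}·∫ ρ(Z)²exp(−T|Z|²) dZ`. -/
theorem gaussian_moment_estimate (l : ℕ) (ε : ℝ) (hε : 0 < ε) (γ : ℝ) (hγ : 0 ≤ γ)
    (ρ : EuclideanSpace ℝ (Fin l) → ℝ) (hmeas : Measurable ρ)
    (hrange : ∀ Z, ρ Z ∈ Set.Icc (0 : ℝ) 1)
    (hone : ∀ Z, ‖Z‖ ≤ ε / 2 → ρ Z = 1)
    (hzero : ∀ Z, ε ≤ ‖Z‖ → ρ Z = 0) :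
    ∃ C : ℝ, 0 < C ∧ ∀ T : ℝ, 1 ≤ T →
      (∫ Z : EuclideanSpace ℝ (Fin l), ‖Z‖ ^ (2 * γ) * ρ Z ^ 2 * Real.exp (-T * ‖Z‖ ^ 2)) ≤
        C * T ^ (-γ) *
          ∫ Z : EuclideanSpace ℝ (Fin l), ρ Z ^ 2 * Real.exp (-T * ‖Z‖ ^ 2) := by
  classical
  obtain ⟨M, hM1, hM⟩ := aux_rpow_le_exp hγ
  have hM0 : (0 : ℝ) < M := lt_of_lt_of_le one_pos hM1
  have hfr : Module.finrank ℝ (EuclideanSpace ℝ (Fin l)) = l := finrank_euclideanSpace_fin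
  have hgauss1 : Integrable (fun Z : EuclideanSpace ℝ (Fin l) => Real.exp (-‖Z‖ ^ 2)) := by
    have := aux_integrable_gauss l one_pos
    simpa using this
  set G : ℝ := ∫ Z in Metric.ball (0 : EuclideanSpace ℝ (Fin l)) (ε / 2),
    Real.exp (-‖Z‖ ^ 2) with hGdef
  have hGpos : 0 < G := by
    have hball : 0 < (volume (Metric.ball (0 : EuclideanSpace ℝ (Fin l)) (ε / 2))).toReal :=
      ENNReal.toReal_pos (Metric.measure_ball_pos volume _ (by linarith)).ne'
        measure_ball_lt_top.ne
    have hle := setIntegral_ge_of_const_le (μ := (volume : Measure (EuclideanSpace ℝ (Fin l))))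
        (c := Real.exp (-(ε / 2) ^ 2)) (s := Metric.ball (0 : EuclideanSpace ℝ (Fin l)) (ε / 2))
        measurableSet_ball measure_ball_lt_top.ne
        (fun x hx => by
          have hx' : ‖x‖ < ε / 2 := mem_ball_zero_iff.mp hx
          have : ‖x‖ ^ 2 ≤ (ε / 2) ^ 2 := by nlinarith [norm_nonneg x]
          exact Real.exp_le_exp.mpr (by linarith))
        hgauss1.integrableOn
    have hpos : 0 < Real.exp (-(ε / 2) ^ 2) *
        (volume (Metric.ball (0 : EuclideanSpace ℝ (Fin l)) (ε / 2))).toReal :=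
      mul_pos (Real.exp_pos _) hball
    rw [smul_eq_mul, measureReal_def] at hle
    linarith
  have hC2pos : (0 : ℝ) < (2 * Real.pi) ^ ((l : ℝ) / 2) :=
    Real.rpow_pos_of_pos (by positivity) _
  refine ⟨M * (2 * Real.pi) ^ ((l : ℝ) / 2) / G,
    div_pos (mul_pos hM0 hC2pos) hGpos, ?_⟩
  intro T hT
  have hT0 : (0 : ℝ) < T := lt_of_lt_of_le one_pos hT
  have hsT : (0 : ℝ) < Real.sqrt T := Real.sqrt_pos.mpr hT0
  have hsT1 : (1 : ℝ) ≤ Real.sqrt T := by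
    rw [show (1 : ℝ) = Real.sqrt 1 by simp]
    exact Real.sqrt_le_sqrt hT
  -- integrability facts
  have hgT : Integrable (fun Z : EuclideanSpace ℝ (Fin l) => Real.exp (-T * ‖Z‖ ^ 2)) :=
    aux_integrable_gauss l hT0
  have hgT2 : Integrable (fun Z : EuclideanSpace ℝ (Fin l) => Real.exp (-(T / 2) * ‖Z‖ ^ 2)) :=
    aux_integrable_gauss l (by linarith)
  have hmexp : ∀ b : ℝ, Measurable (fun Z : EuclideanSpace ℝ (Fin l) =>
      Real.exp (-b * ‖Z‖ ^ 2)) := fun b =>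
    (((measurable_norm.pow_const 2).const_mul (-b)).exp)
  have hρsq : ∀ Z : EuclideanSpace ℝ (Fin l), ρ Z ^ 2 ≤ 1 := fun Z =>
    pow_le_one₀ (hrange Z).1 (hrange Z).2
  have hI3 : Integrable (fun Z : EuclideanSpace ℝ (Fin l) =>
      ρ Z ^ 2 * Real.exp (-T * ‖Z‖ ^ 2)) := by
    refine hgT.mono' ((hmeas.pow_const 2).mul (hmexp T)).aestronglyMeasurable ?_
    filter_upwards with Z
    rw [Real.norm_eq_abs, abs_of_nonneg (by positivity)]
    nlinarith [hρsq Z, Real.exp_pos (-T * ‖Z‖ ^ 2), sq_nonneg (ρ Z)]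
  have hI2 : Integrable (fun Z : EuclideanSpace ℝ (Fin l) =>
      ρ Z ^ 2 * Real.exp (-(T / 2) * ‖Z‖ ^ 2)) := by
    refine hgT2.mono' ((hmeas.pow_const 2).mul (hmexp (T / 2))).aestronglyMeasurable ?_
    filter_upwards with Z
    rw [Real.norm_eq_abs, abs_of_nonneg (by positivity)]
    nlinarith [hρsq Z, Real.exp_pos (-(T / 2) * ‖Z‖ ^ 2), sq_nonneg (ρ Z)]
  have hmrpow : Measurable (fun Z : EuclideanSpace ℝ (Fin l) => ‖Z‖ ^ (2 * γ)) :=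
    ((Real.continuous_rpow_const (by positivity)).comp continuous_norm).measurable
  have hI1 : Integrable (fun Z : EuclideanSpace ℝ (Fin l) =>
      ‖Z‖ ^ (2 * γ) * ρ Z ^ 2 * Real.exp (-T * ‖Z‖ ^ 2)) := by
    refine (hgT.const_mul (ε ^ (2 * γ))).mono'
      ((hmrpow.mul (hmeas.pow_const 2)).mul (hmexp T)).aestronglyMeasurable ?_
    filter_upwards with Z
    rw [Real.norm_eq_abs, abs_of_nonneg (by positivity)]
    rcases le_or_gt ε ‖Z‖ with h | h
    · rw [hzero Z h]
      simp only [ne_eq, OfNat.ofNat_ne_zero, not_false_eq_true, zero_pow, mul_zero, zero_mul]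
      positivity
    · have h1 : ‖Z‖ ^ (2 * γ) ≤ ε ^ (2 * γ) :=
        Real.rpow_le_rpow (norm_nonneg Z) h.le (by positivity)
      have h3 : ‖Z‖ ^ (2 * γ) * ρ Z ^ 2 ≤ ε ^ (2 * γ) * 1 :=
        mul_le_mul h1 (hρsq Z) (by positivity) (by positivity)
      nlinarith [Real.exp_pos (-T * ‖Z‖ ^ 2)]
  -- Step A : pointwise bound and integral bound
  have hptA : ∀ Z : EuclideanSpace ℝ (Fin l),
      ‖Z‖ ^ (2 * γ) * ρ Z ^ 2 * Real.exp (-T * ‖Z‖ ^ 2) ≤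
      (M * T ^ (-γ)) * (ρ Z ^ 2 * Real.exp (-(T / 2) * ‖Z‖ ^ 2)) := by
    intro Z
    have hx : (0 : ℝ) ≤ T * ‖Z‖ ^ 2 := by positivity
    have h1 : (T * ‖Z‖ ^ 2) ^ γ ≤ M * Real.exp (T * ‖Z‖ ^ 2 / 2) := hM _ hx
    have h2 : (T * ‖Z‖ ^ 2) ^ γ = T ^ γ * ‖Z‖ ^ (2 * γ) := by
      rw [Real.mul_rpow hT0.le (by positivity)]
      congr 1
      rw [← Real.rpow_natCast ‖Z‖ 2, ← Real.rpow_mul (norm_nonneg Z)]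
      norm_num [mul_comm]
    have hTγ : (0 : ℝ) < T ^ γ := Real.rpow_pos_of_pos hT0 γ
    have h3 : ‖Z‖ ^ (2 * γ) ≤ T ^ (-γ) * (M * Real.exp (T * ‖Z‖ ^ 2 / 2)) := by
      rw [Real.rpow_neg hT0.le, inv_mul_eq_div, le_div_iff₀ hTγ]
      rw [h2] at h1
      nlinarith
    have hnn : (0 : ℝ) ≤ ρ Z ^ 2 * Real.exp (-T * ‖Z‖ ^ 2) := by positivity
    have key := mul_le_mul_of_nonneg_right h3 hnn
    have hexp : T * ‖Z‖ ^ 2 / 2 + -T * ‖Z‖ ^ 2 = -(T / 2) * ‖Z‖ ^ 2 := by ring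
    calc ‖Z‖ ^ (2 * γ) * ρ Z ^ 2 * Real.exp (-T * ‖Z‖ ^ 2)
        = ‖Z‖ ^ (2 * γ) * (ρ Z ^ 2 * Real.exp (-T * ‖Z‖ ^ 2)) := by ring
      _ ≤ T ^ (-γ) * (M * Real.exp (T * ‖Z‖ ^ 2 / 2)) * (ρ Z ^ 2 * Real.exp (-T * ‖Z‖ ^ 2)) := key
      _ = (M * T ^ (-γ)) * (ρ Z ^ 2 * (Real.exp (T * ‖Z‖ ^ 2 / 2) * Real.exp (-T * ‖Z‖ ^ 2))) := by
          ring
      _ = (M * T ^ (-γ)) * (ρ Z ^ 2 * Real.exp (-(T / 2) * ‖Z‖ ^ 2)) := by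
          rw [← Real.exp_add, hexp]
  have stepA : (∫ Z : EuclideanSpace ℝ (Fin l),
        ‖Z‖ ^ (2 * γ) * ρ Z ^ 2 * Real.exp (-T * ‖Z‖ ^ 2)) ≤
      (M * T ^ (-γ)) * ∫ Z : EuclideanSpace ℝ (Fin l),
        ρ Z ^ 2 * Real.exp (-(T / 2) * ‖Z‖ ^ 2) := by
    calc (∫ Z : EuclideanSpace ℝ (Fin l), ‖Z‖ ^ (2 * γ) * ρ Z ^ 2 * Real.exp (-T * ‖Z‖ ^ 2))
        ≤ ∫ Z : EuclideanSpace ℝ (Fin l),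
            (M * T ^ (-γ)) * (ρ Z ^ 2 * Real.exp (-(T / 2) * ‖Z‖ ^ 2)) :=
          integral_mono hI1 (hI2.const_mul _) hptA
      _ = (M * T ^ (-γ)) * ∫ Z : EuclideanSpace ℝ (Fin l),
            ρ Z ^ 2 * Real.exp (-(T / 2) * ‖Z‖ ^ 2) :=
          integral_const_mul _ _
  -- Step B : upper bound for the intermediate Gaussian integral
  have hgauss_eval : (∫ Z : EuclideanSpace ℝ (Fin l), Real.exp (-(T / 2) * ‖Z‖ ^ 2)) =
      (Real.pi / (T / 2)) ^ ((l : ℝ) / 2) := by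
    rw [GaussianFourier.integral_rexp_neg_mul_sq_norm (by linarith : (0:ℝ) < T / 2), hfr]
  have stepB : (∫ Z : EuclideanSpace ℝ (Fin l), ρ Z ^ 2 * Real.exp (-(T / 2) * ‖Z‖ ^ 2)) ≤
      (2 * Real.pi) ^ ((l : ℝ) / 2) * T ^ (-((l : ℝ) / 2)) := by
    have h1 : (∫ Z : EuclideanSpace ℝ (Fin l), ρ Z ^ 2 * Real.exp (-(T / 2) * ‖Z‖ ^ 2)) ≤
        ∫ Z : EuclideanSpace ℝ (Fin l), Real.exp (-(T / 2) * ‖Z‖ ^ 2) := by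
      refine integral_mono hI2 hgT2 fun Z => ?_
      nlinarith [hρsq Z, Real.exp_pos (-(T / 2) * ‖Z‖ ^ 2), sq_nonneg (ρ Z)]
    have h2 : (Real.pi / (T / 2)) ^ ((l : ℝ) / 2) =
        (2 * Real.pi) ^ ((l : ℝ) / 2) * T ^ (-((l : ℝ) / 2)) := by
      rw [show Real.pi / (T / 2) = 2 * Real.pi / T by field_simp; try ring,
        Real.div_rpow (by positivity) hT0.le, Real.rpow_neg hT0.le, div_eq_mul_inv]
    rw [hgauss_eval, h2] at h1
    exact h1
  -- Step C : lower bound for the denominator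
  set g : EuclideanSpace ℝ (Fin l) → ℝ :=
    Set.indicator (Metric.ball (0 : EuclideanSpace ℝ (Fin l)) (ε / 2))
      (fun Z => Real.exp (-T * ‖Z‖ ^ 2)) with hgdef
  have hIg : Integrable g := hgT.indicator measurableSet_ball
  have hgle : ∀ Z : EuclideanSpace ℝ (Fin l), g Z ≤ ρ Z ^ 2 * Real.exp (-T * ‖Z‖ ^ 2) := by
    intro Z
    by_cases hZ : Z ∈ Metric.ball (0 : EuclideanSpace ℝ (Fin l)) (ε / 2)
    · rw [hgdef, Set.indicator_of_mem hZ, hone Z (le_of_lt (mem_ball_zero_iff.mp hZ))]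
      simp
    · rw [hgdef, Set.indicator_of_notMem hZ]
      positivity
  have hC1 : (∫ Z : EuclideanSpace ℝ (Fin l), g Z) ≤
      ∫ Z : EuclideanSpace ℝ (Fin l), ρ Z ^ 2 * Real.exp (-T * ‖Z‖ ^ 2) :=
    integral_mono hIg hI3 hgle
  have hcomp : ∀ x : EuclideanSpace ℝ (Fin l), g ((Real.sqrt T)⁻¹ • x) =
      Set.indicator (Metric.ball (0 : EuclideanSpace ℝ (Fin l)) (Real.sqrt T * (ε / 2)))
        (fun x => Real.exp (-‖x‖ ^ 2)) x := by
    intro x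
    have hnorm : ‖(Real.sqrt T)⁻¹ • x‖ = (Real.sqrt T)⁻¹ * ‖x‖ := by
      rw [norm_smul, Real.norm_eq_abs, abs_of_pos (by positivity)]
    have hmem : ((Real.sqrt T)⁻¹ • x ∈
        Metric.ball (0 : EuclideanSpace ℝ (Fin l)) (ε / 2)) ↔
        x ∈ Metric.ball (0 : EuclideanSpace ℝ (Fin l)) (Real.sqrt T * (ε / 2)) := by
      rw [mem_ball_zero_iff, mem_ball_zero_iff, hnorm, inv_mul_lt_iff₀ hsT]
    have hsq : Real.sqrt T ^ 2 = T := Real.sq_sqrt hT0.le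
    have hval : -T * ‖(Real.sqrt T)⁻¹ • x‖ ^ 2 = -‖x‖ ^ 2 := by
      rw [hnorm, mul_pow, inv_pow, hsq]
      field_simp
      try ring
    by_cases hZ : x ∈ Metric.ball (0 : EuclideanSpace ℝ (Fin l)) (Real.sqrt T * (ε / 2))
    · rw [Set.indicator_of_mem hZ, hgdef, Set.indicator_of_mem (hmem.mpr hZ), hval]
    · rw [Set.indicator_of_notMem hZ, hgdef,
        Set.indicator_of_notMem (fun h => hZ (hmem.mp h))]
  have hbig : G ≤ ∫ x : EuclideanSpace ℝ (Fin l), g ((Real.sqrt T)⁻¹ • x) := by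
    have heq : (∫ x : EuclideanSpace ℝ (Fin l), g ((Real.sqrt T)⁻¹ • x)) =
        ∫ x in Metric.ball (0 : EuclideanSpace ℝ (Fin l)) (Real.sqrt T * (ε / 2)),
          Real.exp (-‖x‖ ^ 2) := by
      rw [← integral_indicator measurableSet_ball]
      exact integral_congr_ae (Filter.Eventually.of_forall hcomp)
    rw [heq]
    refine setIntegral_mono_set hgauss1.integrableOn ?_ ?_
    · filter_upwards with x using (Real.exp_pos _).le
    · exact HasSubset.Subset.eventuallyLE (Metric.ball_subset_ball (by nlinarith))
  have hsubst : (∫ x : EuclideanSpace ℝ (Fin l), g ((Real.sqrt T)⁻¹ • x)) =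
      Real.sqrt T ^ l * ∫ x : EuclideanSpace ℝ (Fin l), g x := by
    rw [MeasureTheory.Measure.integral_comp_inv_smul
        (volume : Measure (EuclideanSpace ℝ (Fin l))) g (Real.sqrt T),
      hfr, abs_of_pos (pow_pos hsT l), smul_eq_mul]
  have hpow : Real.sqrt T ^ l = T ^ ((l : ℝ) / 2) := by
    rw [Real.sqrt_eq_rpow, ← Real.rpow_natCast (T ^ (1 / (2 : ℝ))) l,
      ← Real.rpow_mul hT0.le]
    congr 1
    ring
  have stepC : G * T ^ (-((l : ℝ) / 2)) ≤
      ∫ Z : EuclideanSpace ℝ (Fin l), ρ Z ^ 2 * Real.exp (-T * ‖Z‖ ^ 2) := by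
    have hTl : (0 : ℝ) < T ^ ((l : ℝ) / 2) := Real.rpow_pos_of_pos hT0 _
    have h1 : G ≤ T ^ ((l : ℝ) / 2) * ∫ x : EuclideanSpace ℝ (Fin l), g x := by
      rw [← hpow, ← hsubst]; exact hbig
    have h2 : G * T ^ (-((l : ℝ) / 2)) ≤ ∫ x : EuclideanSpace ℝ (Fin l), g x := by
      rw [Real.rpow_neg hT0.le, ← div_eq_mul_inv, div_le_iff₀ hTl]
      nlinarith
    exact h2.trans hC1
  -- Combine
  have hfinal₁ : (0 : ℝ) ≤ M * T ^ (-γ) :=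
    mul_nonneg hM0.le (Real.rpow_nonneg hT0.le _)
  have hfinal₂ : (0 : ℝ) ≤ M * (2 * Real.pi) ^ ((l : ℝ) / 2) / G * T ^ (-γ) :=
    mul_nonneg (div_nonneg (mul_nonneg hM0.le hC2pos.le) hGpos.le)
      (Real.rpow_nonneg hT0.le _)
  calc (∫ Z : EuclideanSpace ℝ (Fin l), ‖Z‖ ^ (2 * γ) * ρ Z ^ 2 * Real.exp (-T * ‖Z‖ ^ 2))
      ≤ (M * T ^ (-γ)) * ∫ Z : EuclideanSpace ℝ (Fin l),
          ρ Z ^ 2 * Real.exp (-(T / 2) * ‖Z‖ ^ 2) := stepA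
    _ ≤ (M * T ^ (-γ)) * ((2 * Real.pi) ^ ((l : ℝ) / 2) * T ^ (-((l : ℝ) / 2))) :=
        mul_le_mul_of_nonneg_left stepB hfinal₁
    _ = (M * (2 * Real.pi) ^ ((l : ℝ) / 2) / G) * T ^ (-γ) *
        (G * T ^ (-((l : ℝ) / 2))) := by
        field_simp
    _ ≤ (M * (2 * Real.pi) ^ ((l : ℝ) / 2) / G) * T ^ (-γ) *
        ∫ Z : EuclideanSpace ℝ (Fin l), ρ Z ^ 2 * Real.exp (-T * ‖Z‖ ^ 2) :=
        mul_le_mul_of_nonneg_left stepC hfinal₂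
end
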